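/- Let R be a principal ideal domain with field of fractions Q, let g be a natural number, and let H be a free R-module of rank 2g. Let K be a Q-linear subspace of Q ⊗_R H with dim_Q K ≥ g. Then there exists an R-basis x_1, …, x_{2g} of H such that for every index i with g < i ≤ 2g, the canonical image of x_i in Q ⊗_R H (i.e. 1 ⊗ x_i) belongs to K. -/

import Mathlib

open scoped TensorProduct

/-- Claim 2 in the proof of the concordance lemma: over a PID `R` with fraction
field `Q`, if `H` is a free `R`-module of rank `2g` and `K` is a `Q`-subspace of
`Q ⊗[R] H` of dimension at least `g`, then there is an `R`-basis `x₁, …, x_{2g}`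
of `H` whose last `g` vectors map into `K` under `x ↦ 1 ⊗ x`. -/
theorem stmt0 (R : Type*) [CommRing R] [IsDomain R] [IsPrincipalIdealRing R]
    (Q : Type*) [Field Q] [Algebra R Q] [IsFractionRing R Q]
    (g : ℕ) (H : Type*) [AddCommGroup H] [Module R H]
    [Module.Free R H] [Module.Finite R H]
    (hrank : Module.finrank R H = 2 * g)
    (K : Submodule Q (Q ⊗[R] H))
    (hK : g ≤ Module.finrank Q K) :
    ∃ x : Module.Basis (Fin (2 * g)) R H,
      ∀ i : Fin (2 * g), g ≤ (i : ℕ) → ((1 : Q) ⊗ₜ[R] (x i)) ∈ K := by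
  classical
  set φ : H →ₗ[R] Q ⊗[R] H := TensorProduct.mk R Q H 1 with hφ
  have hloc : IsLocalizedModule (nonZeroDivisors R) φ :=
    (isLocalizedModule_iff_isBaseChange (nonZeroDivisors R) Q φ).2
      (TensorProduct.isBaseChange R H Q)
  set N : Submodule R H := (K.restrictScalars R).comap φ with hN
  -- saturation: torsion-freeness of the quotient
  have hsat : ∀ r : R, r ≠ 0 → ∀ y : H, r • y ∈ N → y ∈ N := by
    intro r hr y hy
    have hmem : φ (r • y) ∈ K := hy
    rw [map_smul, ← algebraMap_smul Q r (φ y)] at hmem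
    have hr' : algebraMap R Q r ≠ 0 := fun h =>
      hr (IsFractionRing.injective R Q (by simpa using h))
    have := K.smul_mem (algebraMap R Q r)⁻¹ hmem
    rw [inv_smul_smul₀ hr'] at this
    exact this
  -- a family of g independent vectors of K
  haveI : Module.Free Q K := Module.Free.of_divisionRing Q K
  let bK := Module.finBasis Q K
  let v : Fin g → Q ⊗[R] H := fun j => (bK (Fin.castLE hK j) : Q ⊗[R] H)
  have hvK : ∀ j, v j ∈ K := fun j => (bK (Fin.castLE hK j)).2
  have hvli : LinearIndependent Q v := by
    have h1 : LinearIndependent Q fun j : Fin g => bK (Fin.castLE hK j) :=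
      bK.linearIndependent.comp _ (Fin.castLE_injective hK)
    rw [← LinearMap.linearIndependent_iff_of_injOn K.subtype (K.injective_subtype.injOn)] at h1
    exact h1
  -- clear denominators
  have hsurj : ∀ j : Fin g, ∃ (m : H) (s : nonZeroDivisors R), (s : R) • v j = φ m := by
    intro j
    obtain ⟨⟨m, s⟩, h⟩ := IsLocalizedModule.surj (nonZeroDivisors R) φ (v j)
    exact ⟨m, s, h⟩
  choose m s hms using hsurj
  have hmN : ∀ j, m j ∈ N := by
    intro j
    have : φ (m j) ∈ K.restrictScalars R := by
      rw [← hms j]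
      exact (K.restrictScalars R).smul_mem _ (hvK j)
    exact this
  -- the m j are linearly independent over R
  have hφm : LinearIndependent R (φ ∘ m) := by
    rw [linearIndependent_iff']
    intro t c hc j hj
    have hc' : ∑ i ∈ t, algebraMap R Q (c i * (s i : R)) • v i = 0 := by
      rw [← hc]
      refine Finset.sum_congr rfl fun i _ => ?_
      rw [Function.comp_apply, ← hms i, algebraMap_smul, mul_smul]
    have hz : algebraMap R Q (c j * (s j : R)) = 0 :=
      linearIndependent_iff'.mp hvli t _ hc' j hj
    have : c j * (s j : R) = 0 := IsFractionRing.injective R Q (by simpa using hz)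
    rcases mul_eq_zero.mp this with h | h
    · exact h
    · exact absurd h (nonZeroDivisors.coe_ne_zero (s j))
  have hmli : LinearIndependent R m := hφm.of_comp φ
  -- lift to N
  let m' : Fin g → N := fun j => ⟨m j, hmN j⟩
  have hm'li : LinearIndependent R m' := by
    have : N.subtype ∘ m' = m := rfl
    exact LinearIndependent.of_comp N.subtype (this ▸ hmli)
  have hgN : g ≤ Module.finrank R N := by
    simpa using hm'li.fintype_card_le_finrank
  -- Smith normal form
  let b0 : Module.Basis (Fin (2 * g)) R H := (Module.finBasis R H).reindex (finCongr hrank)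
  obtain ⟨n, snf⟩ := N.smithNormalForm b0
  have hn : Module.finrank R N = n := by
    rw [Module.finrank_eq_card_basis snf.bN, Fintype.card_fin]
  have hgn : g ≤ n := hn ▸ hgN
  have hng : n ≤ 2 * g := by simpa using Fintype.card_le_of_embedding snf.f
  -- the basis vectors of H indexed by the range of snf.f lie in N
  have hb : ∀ i : Fin n, snf.bM (snf.f i) ∈ N := by
    intro i
    have h1 : snf.a i • snf.bM (snf.f i) ∈ N := by
      rw [← snf.snf i]; exact (snf.bN i).2
    have ha : snf.a i ≠ 0 := by
      intro h
      have h2 := snf.snf i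
      rw [h, zero_smul] at h2
      exact snf.bN.ne_zero i (Subtype.coe_injective (by simpa using h2))
    exact hsat _ ha _ h1
  -- build a permutation of Fin (2g) sending the last g indices into the range of snf.f
  let S : Finset (Fin (2 * g)) := Finset.univ.map snf.f
  have hScard : S.card = n := by simp [S]
  have hSc : Sᶜ.card = 2 * g - n := by
    rw [Finset.card_compl, hScard]; simp
  have hadd : (2 * g - n) + n = 2 * g := Nat.sub_add_cancel hng
  let eS : Fin n ≃ {a // a ∈ S} := ((S.equivFin).trans (finCongr hScard)).symm
  let eSc : Fin (2 * g - n) ≃ {a // ¬ a ∈ S} :=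
    (((Sᶜ.equivFin).trans (finCongr hSc)).symm).trans
      (Equiv.subtypeEquivRight fun a => Finset.mem_compl)
  let e : Fin (2 * g) ≃ Fin (2 * g) :=
    (((((finCongr hadd.symm).trans finSumFinEquiv.symm).trans
      (eSc.sumCongr eS)).trans (Equiv.sumComm _ _)).trans (Equiv.sumCompl (· ∈ S)))
  have he : ∀ i : Fin (2 * g), g ≤ (i : ℕ) → e i ∈ S := by
    intro i hi
    rcases hs : finSumFinEquiv.symm (finCongr hadd.symm i) with j | j
    · exfalso
      have h2 : finCongr hadd.symm i = finSumFinEquiv (Sum.inl j) := by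
        rw [← hs, Equiv.apply_symm_apply]
      have h3 : (i : ℕ) = (j : ℕ) := by
        have := congrArg Fin.val h2
        simpa using this
      have := j.isLt
      omega
    · show e i ∈ S
      simp only [e, Equiv.trans_apply, hs, Equiv.sumCongr_apply, Sum.map_inr,
        Equiv.sumComm_apply, Sum.swap_inr, Equiv.sumCompl_apply_inl]
      exact (eS j).2
  -- final basis
  refine ⟨snf.bM.reindex e.symm, fun i hi => ?_⟩
  have hix : (snf.bM.reindex e.symm) i = snf.bM (e i) := by
    rw [Module.Basis.reindex_apply, Equiv.symm_symm]
  rw [hix]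
  obtain ⟨j, -, hj⟩ := Finset.mem_map.mp (he i hi)
  rw [← hj]
  exact hb j
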